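/- Sample-size sufficiency for probabilistic scaling (appendix computation): Let ε ∈ (0,1) and δ ∈ (0,1), and let N be a natural number with N ≥ (7.67/ε)·ln(1/δ). Set r := ⌈εN/2⌉. Then N ≥ (1/ε)·( (r − 1) + ln(1/δ) + √( 2(r − 1)·ln(1/δ) ) ). -/
import Mathlib


/-- Sample-size sufficiency for probabilistic scaling (appendix computation):
if `ε, δ ∈ (0,1)`, `N ≥ (7.67/ε)·ln(1/δ)` and `r = ⌈εN/2⌉`, then
`N ≥ (1/ε)·((r−1) + ln(1/δ) + √(2(r−1)·ln(1/δ)))`. -/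
theorem sample_size_sufficiency (ε δ : ℝ) (hε : ε ∈ Set.Ioo (0 : ℝ) 1)
    (hδ : δ ∈ Set.Ioo (0 : ℝ) 1) (N : ℕ)
    (hN : (N : ℝ) ≥ 7.67 / ε * Real.log (1 / δ))
    (r : ℕ) (hr : r = ⌈ε * (N : ℝ) / 2⌉₊) :
    (N : ℝ) ≥ (1 / ε) *
      (((r : ℝ) - 1) + Real.log (1 / δ) +
        Real.sqrt (2 * ((r : ℝ) - 1) * Real.log (1 / δ))) := by
  obtain ⟨hε0, hε1⟩ := hε
  obtain ⟨hδ0, hδ1⟩ := hδ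
  set L := Real.log (1 / δ) with hLdef
  have hL : 0 < L := Real.log_pos (by rw [lt_div_iff₀ hδ0]; linarith)
  have hxN : 7.67 * L ≤ ε * N := by
    rw [ge_iff_le, div_mul_eq_mul_div, div_le_iff₀ hε0] at hN
    nlinarith
  have hN0 : (0 : ℝ) < ε * N := by nlinarith
  have hr1 : 1 ≤ r := by
    rw [hr]; exact Nat.one_le_ceil_iff.mpr (by linarith)
  have ha : (r : ℝ) - 1 ≤ ε * N / 2 := by
    rw [hr]
    have := Nat.ceil_lt_add_one (show (0:ℝ) ≤ ε * N / 2 by linarith)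
    linarith
  have ha0 : (0 : ℝ) ≤ (r : ℝ) - 1 := by
    have : (1 : ℝ) ≤ (r : ℝ) := by exact_mod_cast hr1
    linarith
  have h3 : (0 : ℝ) ≤ ε * N / 2 - L := by nlinarith
  have hkey : Real.sqrt (2 * ((r : ℝ) - 1) * L) ≤ ε * N / 2 - L := by
    have h1 : 2 * ((r : ℝ) - 1) * L ≤ ε * N * L := by nlinarith
    have h2 : ε * N * L ≤ (ε * N / 2 - L) ^ 2 := by nlinarith
    calc Real.sqrt (2 * ((r : ℝ) - 1) * L)
        ≤ Real.sqrt ((ε * N / 2 - L) ^ 2) := Real.sqrt_le_sqrt (le_trans h1 h2)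
      _ = ε * N / 2 - L := Real.sqrt_sq h3
  rw [ge_iff_le, one_div, inv_mul_le_iff₀ hε0]
  linarith
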